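/- Suppose (x*, λ*, ν*) ∈ ℝ^N × ℝ × ℝ satisfies: qᵢ·x*ᵢ + c₀ᵢ + ν*/qᵢ + λ* = 0 for all i; Σᵢ x*ᵢ = Σᵢ aᵢ; ν* ≥ 0; λmax − λ* ≥ 0; ν*·(λmax − λ*) = 0. Suppose also (ȳ, s̄, λ̄, μ̄s) ∈ ℝ^N × ℝ × ℝ × ℝ satisfies: qᵢ·ȳᵢ + c₀ᵢ + λ̄ = 0 for all i; λmax − λ̄ − μ̄s = 0; Σᵢ ȳᵢ − Σᵢ aᵢ = s̄; μ̄s ≥ 0; s̄ ≥ 0; μ̄s·s̄ = 0. Then λ̄ = λ*, ȳᵢ = x*ᵢ + ν*/qᵢ² for all i, and s̄ = (Σᵢ 1/qᵢ²)·ν*. -/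

import Mathlib

/-- Relation between the optimal socially acceptable equilibrium triple `(x*, lam*, ν*)` and the
primal-dual optimizer `(yBar, sBar, lamBar, muS)` of the modified primal problem. -/
theorem stmt_11 (N : ℕ) (hN : 0 < N) (q c₀ a : Fin N → ℝ) (hq : ∀ i, 0 < q i)
    (lamMax : ℝ)
    (xs : Fin N → ℝ) (lams νs : ℝ)
    (hx1 : ∀ i, q i * xs i + c₀ i + νs / q i + lams = 0)
    (hx2 : ∑ i, xs i = ∑ i, a i)
    (hx3 : 0 ≤ νs) (hx4 : 0 ≤ lamMax - lams) (hx5 : νs * (lamMax - lams) = 0)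
    (yBar : Fin N → ℝ) (sBar lamBar muS : ℝ)
    (hy1 : ∀ i, q i * yBar i + c₀ i + lamBar = 0)
    (hy2 : lamMax - lamBar - muS = 0)
    (hy3 : (∑ i, yBar i) - (∑ i, a i) = sBar)
    (hy4 : 0 ≤ muS) (hy5 : 0 ≤ sBar) (hy6 : muS * sBar = 0) :
    lamBar = lams ∧ (∀ i, yBar i = xs i + νs / (q i) ^ 2) ∧
      sBar = (∑ i, 1 / (q i) ^ 2) * νs := by
  have hne : (Finset.univ : Finset (Fin N)).Nonempty := by
    simp [Finset.univ_nonempty_iff, Fin.pos_iff_nonempty.mp hN]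
  have hS : 0 < ∑ i, 1 / q i :=
    Finset.sum_pos (fun i _ => div_pos one_pos (hq i)) hne
  have hT : 0 < ∑ i, 1 / (q i) ^ 2 :=
    Finset.sum_pos (fun i _ => div_pos one_pos (pow_pos (hq i) 2)) hne
  have hdiff : ∀ i, yBar i = xs i + νs / (q i) ^ 2 + (lams - lamBar) / q i := by
    intro i
    have h1 := hx1 i
    have h2 := hy1 i
    have hqi : q i ≠ 0 := (hq i).ne'
    field_simp at h1 h2 ⊢
    linear_combination (q i) * h2 - h1
  have e2 : ∑ i, νs / (q i) ^ 2 = (∑ i, 1 / (q i) ^ 2) * νs := by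
    rw [Finset.sum_mul]; exact Finset.sum_congr rfl fun i _ => by ring
  have e3 : ∑ i, (lams - lamBar) / q i = (lams - lamBar) * ∑ i, 1 / q i := by
    rw [Finset.mul_sum]; exact Finset.sum_congr rfl fun i _ => by ring
  have hsum : sBar = (∑ i, 1 / (q i) ^ 2) * νs + (lams - lamBar) * ∑ i, 1 / q i := by
    have hy : (∑ i, yBar i) = (∑ i, xs i) + (∑ i, 1 / (q i) ^ 2) * νs
        + (lams - lamBar) * ∑ i, 1 / q i := by
      rw [Finset.sum_congr rfl fun i _ => hdiff i, Finset.sum_add_distrib,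
        Finset.sum_add_distrib, e2, e3]
    rw [← hy3, hy, hx2]; ring
  have hlam : lamBar = lams := by
    rcases mul_eq_zero.mp hx5 with hν | hl
    · rcases mul_eq_zero.mp hy6 with hμ | hs
      · rw [hν] at hsum
        have h1 : lams ≤ lamBar := by linarith
        nlinarith [hsum, hy5, hS]
      · rw [hs, hν] at hsum
        have : (lams - lamBar) * ∑ i, 1 / q i = 0 := by linarith
        rcases mul_eq_zero.mp this with h | h
        · linarith
        · exact absurd h hS.ne'
    · rcases mul_eq_zero.mp hy6 with hμ | hs
      · linarith
      · rw [hs] at hsum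
        have hd : 0 ≤ lams - lamBar := by linarith
        nlinarith [hsum, mul_nonneg hT.le hx3, mul_nonneg hd hS.le, hS]
  exact ⟨hlam, fun i => by rw [hdiff i, hlam]; ring, by rw [hsum, hlam]; ring⟩
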